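/- The rational function R(z,w) = (w - z²)³ / (1 + w³ - 2zw)² is a first integral of the dual billiard on the parabola {w = z²} with involutions σ_P : u ↦ -u/(1 + f(z₀)u), f(z) = 4z²/(z³ - 1): for every P = (z₀, z₀²) with z₀³ ≠ 1, R ∘ σ_P = R on the tangent line L_P. -/

import Mathlib

/-- The rational function `R(z,w) = (w - z²)³ / (1 + w³ - 2zw)²`. -/
noncomputable def Rc1 (z w : ℂ) : ℂ := (w - z ^ 2) ^ 3 / (1 + w ^ 3 - 2 * z * w) ^ 2

/-- `f(z) = 4z²/(z³ - 1)`. -/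
noncomputable def fc1 (z : ℂ) : ℂ := 4 * z ^ 2 / (z ^ 3 - 1)

/-- The dual billiard involution on the tangent line, in the coordinate `u = z - z₀`. -/
noncomputable def sigmaU (f u : ℂ) : ℂ := -u / (1 + f * u)

/-- The point of the tangent line `L_P = {w = 2z₀z - z₀²}` to the parabola `{w = z²}`
at `P = (z₀, z₀²)` with coordinate `u = z - z₀`. -/
noncomputable def linePt (z₀ u : ℂ) : ℂ × ℂ := (z₀ + u, z₀ ^ 2 + 2 * z₀ * u)

/-- the rational function `R(z,w) = (w - z²)³/(1 + w³ - 2zw)²` is a first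
integral of the dual billiard on the parabola `{w = z²}` with involutions
`σ_P : u ↦ -u/(1 + f(z₀)u)`, `f(z) = 4z²/(z³ - 1)`: for every `P = (z₀, z₀²)` with
`z₀³ ≠ 1`, one has `R ∘ σ_P = R` on the tangent line `L_P` (at every point of `L_P`
where both sides are defined). -/
theorem Rc1_is_integral (z₀ : ℂ) (hz1 : z₀ ^ 3 ≠ 1) (u : ℂ)
    (hu : 1 + fc1 z₀ * u ≠ 0)
    (hden : 1 + (linePt z₀ u).2 ^ 3 - 2 * (linePt z₀ u).1 * (linePt z₀ u).2 ≠ 0)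
    (hden' : 1 + (linePt z₀ (sigmaU (fc1 z₀) u)).2 ^ 3 -
        2 * (linePt z₀ (sigmaU (fc1 z₀) u)).1 * (linePt z₀ (sigmaU (fc1 z₀) u)).2 ≠ 0) :
    Rc1 (linePt z₀ (sigmaU (fc1 z₀) u)).1 (linePt z₀ (sigmaU (fc1 z₀) u)).2
      = Rc1 (linePt z₀ u).1 (linePt z₀ u).2 := by
  have hd : z₀ ^ 3 - 1 ≠ 0 := sub_ne_zero.mpr hz1
  set D : ℂ := z₀ ^ 3 - 1 with hD
  set E : ℂ := D + 4 * z₀ ^ 2 * u with hE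
  have hfu : 1 + fc1 z₀ * u = E / D := by
    rw [fc1, hE, hD]; field_simp
  have hEne : E ≠ 0 := by
    intro h
    apply hu
    rw [hfu, h, zero_div]
  set v : ℂ := sigmaU (fc1 z₀) u with hvdef
  have hv : v = -(D * u) / E := by
    rw [hvdef, sigmaU, hfu, div_div_eq_mul_div]
    field_simp
  -- the key polynomial identity
  have hQ : (1 + (z₀ ^ 2 + 2 * z₀ * v) ^ 3 - 2 * (z₀ + v) * (z₀ ^ 2 + 2 * z₀ * v)) * E ^ 3
      = (1 + (z₀ ^ 2 + 2 * z₀ * u) ^ 3 - 2 * (z₀ + u) * (z₀ ^ 2 + 2 * z₀ * u)) * D ^ 3 := by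
    rw [hv]
    field_simp
    rw [hE, hD]; ring
  have hvE : v * E = -(D * u) := by
    rw [hv, div_mul_cancel₀ _ hEne]
  simp only [Rc1, linePt] at hden hden' ⊢
  rw [div_eq_div_iff (pow_ne_zero 2 hden') (pow_ne_zero 2 hden)]
  -- multiply both sides by E^6 and use hQ, hvE
  have hE6 : E ^ 6 ≠ 0 := pow_ne_zero 6 hEne
  apply mul_right_cancel₀ hE6
  have expand : (z₀ ^ 2 + 2 * z₀ * v - (z₀ + v) ^ 2) ^ 3 = -(v ^ 6) := by ring
  have expand' : (z₀ ^ 2 + 2 * z₀ * u - (z₀ + u) ^ 2) ^ 3 = -(u ^ 6) := by ring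
  rw [expand, expand']
  have h1 : -(v ^ 6) * (1 + (z₀ ^ 2 + 2 * z₀ * u) ^ 3 - 2 * (z₀ + u) * (z₀ ^ 2 + 2 * z₀ * u)) ^ 2 * E ^ 6
      = -((v * E) ^ 6) * (1 + (z₀ ^ 2 + 2 * z₀ * u) ^ 3 - 2 * (z₀ + u) * (z₀ ^ 2 + 2 * z₀ * u)) ^ 2 := by
    ring
  have h2 : -(u ^ 6) * (1 + (z₀ ^ 2 + 2 * z₀ * v) ^ 3 - 2 * (z₀ + v) * (z₀ ^ 2 + 2 * z₀ * v)) ^ 2 * E ^ 6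
      = -(u ^ 6) * ((1 + (z₀ ^ 2 + 2 * z₀ * v) ^ 3 - 2 * (z₀ + v) * (z₀ ^ 2 + 2 * z₀ * v)) * E ^ 3) ^ 2 := by
    ring
  rw [h1, h2, hvE, hQ]
  ring
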